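/- Let E = (e_n : n ∈ ℕ) be a Leja sequence for the closed unit disk D with e_0 = 1, and let d ≥ 2 with binary expansion d = 2^{n_0} + ⋯ + 2^{n_r}, n_0 > ⋯ > n_r ≥ 0. Then for all 0 ≤ s < t ≤ d−1 and all x ∈ ℝ² with ‖x‖ ≤ 1, |h_{st}(⟨(e_s−e_t)^⊥, x⟩)| ≤ 2^{2r+1} · d · |e_s − e_t|^{d−2} / 2^{d−2}. -/

import Mathlib

open Finset

/-- `e` is a Leja sequence for the closed unit disk `D` with `e 0 = 1`: all points lie in `D`
and for every `d ≥ 1` the product `∏_{j<d} |z - e j|` over `z ∈ D` is maximized at `z = e d`. -/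
def IsLejaSeq (e : ℕ → ℂ) : Prop :=
  e 0 = 1 ∧ (∀ n, ‖e n‖ ≤ 1) ∧
    ∀ d : ℕ, 1 ≤ d → ∀ z : ℂ, ‖z‖ ≤ 1 →
      ∏ j ∈ Finset.range d, ‖z - e j‖ ≤
        ∏ j ∈ Finset.range d, ‖e d - e j‖

/-- Euclidean scalar product on ℝ² ≅ ℂ. -/
noncomputable def inner2 (x y : ℂ) : ℝ := x.re * y.re + x.im * y.im

/-- The univariate polynomial h_{st} associated to a tuple `a` of points of ℝ² ≅ ℂ:
`h_{st}(w) = ∏_{m=0, m≠s}^{d−1} (w − ⟨(a_s−a_t)^⊥, a_m⟩)`, where `x^⊥ = i·x`. -/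
noncomputable def hPoly (d s t : ℕ) (a : ℕ → ℂ) : ℝ → ℝ :=
  fun w => ∏ m ∈ (Finset.range d).erase s, (w - inner2 (Complex.I * (a s - a t)) (a m))


/-- Compatibility shim: the complex absolute value as a bundled absolute value given by the norm. -/
noncomputable def Complex.abs : AbsoluteValue ℂ ℝ where
  toFun := fun z => ‖z‖
  map_mul' := norm_mul
  nonneg' := norm_nonneg
  eq_zero' _ := norm_eq_zero
  add_le' := norm_add_le

@[simp] theorem Complex.abs_apply' (z : ℂ) : Complex.abs z = ‖z‖ := rfl

theorem Complex.sq_abs (z : ℂ) : Complex.abs z ^ 2 = Complex.normSq z := Complex.sq_norm z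

theorem Complex.normSq_eq_abs (z : ℂ) : Complex.normSq z = Complex.abs z ^ 2 :=
  Complex.normSq_eq_norm_sq z

theorem Complex.abs_exp (z : ℂ) : Complex.abs (Complex.exp z) = Real.exp z.re := Complex.norm_exp z

theorem Complex.abs_conj (z : ℂ) : Complex.abs ((starRingEnd ℂ) z) = Complex.abs z :=
  Complex.norm_conj z

theorem Complex.abs_I : Complex.abs Complex.I = 1 := Complex.norm_I

theorem Complex.abs_ofReal (r : ℝ) : Complex.abs (r : ℂ) = |r| := Complex.norm_real r

theorem Complex.abs_apply (z : ℂ) : Complex.abs z = Real.sqrt (Complex.normSq z) :=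
  Complex.norm_def z

theorem Complex.abs_re_le_abs (z : ℂ) : |z.re| ≤ Complex.abs z := Complex.abs_re_le_norm z

noncomputable section LejaAuxiliary




def LejaTup (g : ℕ → ℂ) (L : ℕ) : Prop :=
  g 0 = 1 ∧ (∀ j < L, Complex.abs (g j) ≤ 1) ∧
    ∀ d : ℕ, 1 ≤ d → d < L → ∀ z : ℂ, Complex.abs z ≤ 1 →
      ∏ j ∈ Finset.range d, Complex.abs (z - g j) ≤
        ∏ j ∈ Finset.range d, Complex.abs (g d - g j)

theorem LejaTup.mono {g : ℕ → ℂ} {L K : ℕ} (h : LejaTup g L) (hK : K ≤ L) : LejaTup g K :=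
  ⟨h.1, fun j hj => h.2.1 j (lt_of_lt_of_le hj hK),
    fun d hd1 hd2 => h.2.2 d hd1 (lt_of_lt_of_le hd2 hK)⟩

def tailSeq (g : ℕ → ℂ) (M : ℕ) : ℕ → ℂ := fun j => (starRingEnd ℂ) (g M) * g (M + j)

def Full (g : ℕ → ℂ) (L : ℕ) : Prop :=
  ∀ m : ℕ, 2 ^ m ≤ L → ∀ z : ℂ, ∏ j ∈ Finset.range (2 ^ m), (z - g j) = z ^ 2 ^ m - 1

def Tails (g : ℕ → ℂ) (L : ℕ) : Prop :=
  ∀ m : ℕ, 2 ^ m < L → L ≤ 2 ^ (m + 1) → LejaTup (tailSeq g (2 ^ m)) (L - 2 ^ m)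

def Deep (g : ℕ → ℂ) (L : ℕ) : Prop :=
  1 ≤ L → ∃ ζ : ℂ, ∃ m0 : ℕ, 2 ^ m0 ≤ L ∧ ζ ^ 2 ^ m0 = -1 ∧ Complex.abs ζ ≤ 1 ∧
    ∀ z : ℂ, Complex.abs z ≤ 1 →
      ∏ j ∈ Finset.range L, Complex.abs (z - g j) ≤
        ∏ j ∈ Finset.range L, Complex.abs (ζ - g j)

theorem eq_neg_one_of_abs {w : ℂ} (h1 : Complex.abs w ≤ 1) (h2 : 2 ≤ Complex.abs (w - 1)) :
    w = -1 := by
  have hn1 : Complex.normSq w ≤ 1 := by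
    have h := Complex.sq_abs w
    nlinarith [Complex.abs.nonneg w]
  have hn2 : 4 ≤ Complex.normSq (w - 1) := by
    have h := Complex.sq_abs (w - 1)
    nlinarith [Complex.abs.nonneg (w - 1)]
  rw [Complex.normSq_apply] at hn1 hn2
  simp only [Complex.sub_re, Complex.sub_im, Complex.one_re, Complex.one_im, sub_zero] at hn2
  have hre : w.re = -1 := by nlinarith
  have him : w.im = 0 := by nlinarith
  apply Complex.ext <;> simp [hre, him]

theorem exists_pow_eq_neg_one (M : ℕ) (hM : 0 < M) :
    ∃ z : ℂ, z ^ M = -1 ∧ Complex.abs z = 1 := by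
  refine ⟨Complex.exp ((Real.pi / M : ℝ) * Complex.I), ?_, ?_⟩
  · rw [← Complex.exp_nat_mul]
    have hM0 : (M : ℂ) ≠ 0 := Nat.cast_ne_zero.mpr hM.ne'
    have : (M : ℂ) * ((Real.pi / M : ℝ) * Complex.I) = (Real.pi : ℂ) * Complex.I := by
      push_cast
      field_simp
    rw [this, Complex.exp_pi_mul_I]
  · rw [Complex.abs_exp]
    simp

theorem real_pow_eq_one {x : ℝ} (hx : 0 ≤ x) {M : ℕ} (hM : 0 < M) (h : x ^ M = 1) : x = 1 := by
  rcases lt_trichotomy x 1 with h1 | h1 | h1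
  · exfalso
    have := pow_lt_one₀ hx h1 hM.ne'
    rw [h] at this
    exact lt_irrefl 1 this
  · exact h1
  · exfalso
    have := one_lt_pow₀ h1 hM.ne'
    rw [h] at this
    exact lt_irrefl 1 this

theorem abs_eq_one_of_pow_neg_one {ρ : ℂ} {M : ℕ} (hM : 0 < M) (h : ρ ^ M = -1) :
    Complex.abs ρ = 1 := by
  have : Complex.abs ρ ^ M = 1 := by rw [← map_pow, h]; simp
  exact real_pow_eq_one (Complex.abs.nonneg _) hM this

theorem pow_two_pow_eq_one {ζ : ℂ} {μ m : ℕ} (h : μ < m) (hζ : ζ ^ 2 ^ μ = -1) :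
    ζ ^ 2 ^ m = 1 := by
  have h1 : 2 ^ m = 2 ^ μ * 2 ^ (m - μ) := by
    rw [← pow_add]; congr 1; omega
  rw [h1, pow_mul, hζ]
  have : Even (2 ^ (m - μ)) := by
    refine ⟨2 ^ (m - μ - 1), ?_⟩
    have : 2 ^ (m - μ) = 2 ^ (m - μ - 1) * 2 := by
      rw [← pow_succ]; congr 1; omega
    omega
  exact this.neg_one_pow

theorem abs_pow_sub_one_le {a : ℂ} (ha : Complex.abs a ≤ 1) (M : ℕ) :
    Complex.abs (a ^ M - 1) ≤ 2 := by
  calc Complex.abs (a ^ M - 1) ≤ Complex.abs (a ^ M) + Complex.abs 1 := by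
        rw [sub_eq_add_neg]
        refine le_trans (Complex.abs.add_le _ _) ?_
        simp
    _ ≤ 1 + 1 := by
        rw [map_pow, map_one]
        exact add_le_add (pow_le_one₀ (Complex.abs.nonneg _) ha) le_rfl
    _ = 2 := by norm_num

theorem comb (L : ℕ) : ∀ g : ℕ → ℂ, LejaTup g L → Full g L ∧ Tails g L ∧ Deep g L := by
  induction L using Nat.strong_induction_on with
  | _ L IH =>
  intro g hg
  obtain ⟨hg0, hgle, hgmax⟩ := hg
  -- rotation lemma
  have rot : ∀ m : ℕ, 2 ^ m < L →
      (∀ z : ℂ, ∏ j ∈ Finset.range (2 ^ m), (z - g j) = z ^ 2 ^ m - 1) →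
      g (2 ^ m) ^ 2 ^ m = -1 := by
    intro m hm hfull
    obtain ⟨z, hz1, hz2⟩ := exists_pow_eq_neg_one (2 ^ m) (pow_pos (by norm_num : (0:ℕ) < 2) m)
    have h1 := hgmax (2 ^ m) Nat.one_le_two_pow hm z (le_of_eq hz2)
    have e1 : ∏ j ∈ Finset.range (2 ^ m), Complex.abs (z - g j) = 2 := by
      rw [← map_prod, hfull, hz1]
      norm_num
    have e2 : ∏ j ∈ Finset.range (2 ^ m), Complex.abs (g (2 ^ m) - g j)
        = Complex.abs (g (2 ^ m) ^ 2 ^ m - 1) := by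
      rw [← map_prod, hfull]
    have habs : Complex.abs (g (2 ^ m) ^ 2 ^ m) ≤ 1 := by
      rw [map_pow]
      exact pow_le_one₀ (Complex.abs.nonneg _) (hgle _ hm)
    refine eq_neg_one_of_abs habs ?_
    rw [e1, e2] at h1
    exact h1
  -- tails from fullness
  have tails_of_full : ∀ m : ℕ, 2 ^ m < L → L ≤ 2 ^ (m + 1) →
      (∀ z : ℂ, ∏ j ∈ Finset.range (2 ^ m), (z - g j) = z ^ 2 ^ m - 1) →
      LejaTup (tailSeq g (2 ^ m)) (L - 2 ^ m) := by
    intro m hmL hL2 hfull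
    have hMpos : 0 < 2 ^ m := pow_pos (by norm_num : (0:ℕ) < 2) m
    have hrot : g (2 ^ m) ^ 2 ^ m = -1 := rot m hmL hfull
    have hrabs : Complex.abs (g (2 ^ m)) = 1 := abs_eq_one_of_pow_neg_one hMpos hrot
    have hrc : g (2 ^ m) * (starRingEnd ℂ) (g (2 ^ m)) = 1 := by
      rw [Complex.mul_conj]
      norm_cast
      rw [Complex.normSq_eq_abs, hrabs]
      norm_num
    have htail0 : tailSeq g (2 ^ m) 0 = 1 := by
      simp only [tailSeq, Nat.add_zero]
      rw [mul_comm]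
      exact hrc
    have hg_eq : ∀ j, g (2 ^ m + j) = g (2 ^ m) * tailSeq g (2 ^ m) j := by
      intro j
      simp only [tailSeq]
      rw [← mul_assoc, hrc, one_mul]
    have key : ∀ k, k ≤ L - 2 ^ m → LejaTup (tailSeq g (2 ^ m)) k := by
      intro k
      induction k with
      | zero =>
        intro _
        exact ⟨htail0, fun j hj => absurd hj (Nat.not_lt_zero j), fun d hd1 hd2 => by omega⟩
      | succ k ihk =>
        intro hk1
        have hLT := ihk (by omega)
        refine ⟨htail0, ?_, ?_⟩
        · intro j hj
          simp only [tailSeq]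
          rw [map_mul]
          have : Complex.abs ((starRingEnd ℂ) (g (2 ^ m))) = 1 := by
            rw [Complex.abs_conj, hrabs]
          rw [this, one_mul]
          exact hgle _ (by omega)
        · intro d hd1 hd2 z hz
          rcases Nat.lt_or_ge d k with hdk | hdk
          · exact hLT.2.2 d hd1 hdk z hz
          · have hdk' : d = k := by omega
            subst hdk'
            -- now d is replaced by d
            -- crux: step at d = d
            have hkL : d < L := by omega
            obtain ⟨_, _, DeepH⟩ := IH d hkL (tailSeq g (2 ^ m)) hLT
            obtain ⟨ζ, μ, hμk, hζpow, hζabs, hζmax⟩ := DeepH (by omega)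
            have hμm : μ < m := by
              have h1 : (2 : ℕ) ^ μ < 2 ^ m := by omega
              exact (Nat.pow_lt_pow_iff_right (by norm_num)).mp h1
            have hζM : ζ ^ 2 ^ m = 1 := pow_two_pow_eq_one hμm hζpow
            -- apply the g-step at M + d with test point  g M * ζ
            have hstep := hgmax (2 ^ m + d) (by omega) (by omega) (g (2 ^ m) * ζ)
              (by rw [map_mul, hrabs, one_mul]; exact hζabs)
            have split : ∀ w : ℂ,
                ∏ j ∈ Finset.range (2 ^ m + d), Complex.abs (w - g j)
                  = Complex.abs (w ^ 2 ^ m - 1) *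
                    ∏ j ∈ Finset.range d, Complex.abs (w - g (2 ^ m + j)) := by
              intro w
              rw [Finset.prod_range_add]
              congr 1
              rw [← map_prod, hfull]
            have lhs_eq : ∏ j ∈ Finset.range (2 ^ m + d), Complex.abs (g (2 ^ m) * ζ - g j)
                = 2 * ∏ j ∈ Finset.range d, Complex.abs (ζ - tailSeq g (2 ^ m) j) := by
              rw [split]
              congr 1
              · rw [mul_pow, hrot, hζM, mul_one]
                norm_num
              · refine Finset.prod_congr rfl fun j _ => ?_
                rw [hg_eq j, ← mul_sub, map_mul, hrabs, one_mul]
            have rhs_le : ∏ j ∈ Finset.range (2 ^ m + d),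
                  Complex.abs (g (2 ^ m + d) - g j)
                ≤ 2 * ∏ j ∈ Finset.range d,
                    Complex.abs (tailSeq g (2 ^ m) d - tailSeq g (2 ^ m) j) := by
              rw [split]
              have e3 : ∏ j ∈ Finset.range d, Complex.abs (g (2 ^ m + d) - g (2 ^ m + j))
                  = ∏ j ∈ Finset.range d,
                      Complex.abs (tailSeq g (2 ^ m) d - tailSeq g (2 ^ m) j) := by
                refine Finset.prod_congr rfl fun j _ => ?_
                rw [hg_eq j, hg_eq d, ← mul_sub, map_mul, hrabs, one_mul]
              rw [e3]
              refine mul_le_mul_of_nonneg_right ?_ (Finset.prod_nonneg fun j _ => Complex.abs.nonneg _)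
              exact abs_pow_sub_one_le (hgle _ (by omega)) _
            have hζle : ∏ j ∈ Finset.range d, Complex.abs (ζ - tailSeq g (2 ^ m) j)
                ≤ ∏ j ∈ Finset.range d,
                    Complex.abs (tailSeq g (2 ^ m) d - tailSeq g (2 ^ m) j) := by
              have := le_trans (le_of_eq lhs_eq.symm) (le_trans hstep rhs_le)
              linarith
            exact le_trans (hζmax z hz) hζle
    have := key (L - 2 ^ m) le_rfl
    exact this
  -- joint induction for Full and Tails
  have ft : ∀ m : ℕ,
      (2 ^ m ≤ L → ∀ z : ℂ, ∏ j ∈ Finset.range (2 ^ m), (z - g j) = z ^ 2 ^ m - 1) ∧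
      (2 ^ m < L → L ≤ 2 ^ (m + 1) → LejaTup (tailSeq g (2 ^ m)) (L - 2 ^ m)) := by
    intro m
    induction m with
    | zero =>
      constructor
      · intro _ z
        simp [hg0]
      · intro h1 h2
        exact tails_of_full 0 h1 h2 (by intro z; simp [hg0])
    | succ m ihm =>
      have fullsucc : 2 ^ (m + 1) ≤ L →
          ∀ z : ℂ, ∏ j ∈ Finset.range (2 ^ (m + 1)), (z - g j) = z ^ 2 ^ (m + 1) - 1 := by
        intro hm1 z
        have hmm : (2 : ℕ) ^ m < 2 ^ (m + 1) := by
          have := pow_succ 2 m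
          have := pow_pos (by norm_num : (0:ℕ) < 2) m
          omega
        have hfm := ihm.1 (by omega)
        have hrot := rot m (by omega) hfm
        have hMpos : 0 < 2 ^ m := pow_pos (by norm_num : (0:ℕ) < 2) m
        have hrabs : Complex.abs (g (2 ^ m)) = 1 := abs_eq_one_of_pow_neg_one hMpos hrot
        have hrc : g (2 ^ m) * (starRingEnd ℂ) (g (2 ^ m)) = 1 := by
          rw [Complex.mul_conj]
          norm_cast
          rw [Complex.normSq_eq_abs, hrabs]
          norm_num
        have hg_eq : ∀ j, g (2 ^ m + j) = g (2 ^ m) * tailSeq g (2 ^ m) j := by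
          intro j
          simp only [tailSeq]
          rw [← mul_assoc, hrc, one_mul]
        -- tail of length 2^m is a Leja tuple
        have htail : LejaTup (tailSeq g (2 ^ m)) (2 ^ m) := by
          rcases Nat.lt_or_ge (2 ^ (m + 1)) L with hc | hc
          · have hmono : LejaTup g (2 ^ (m + 1)) := LejaTup.mono ⟨hg0, hgle, hgmax⟩ hc.le
            have := (IH (2 ^ (m + 1)) hc g hmono).2.1 m hmm le_rfl
            have he : 2 ^ (m + 1) - 2 ^ m = 2 ^ m := by
              have := pow_succ 2 m
              omega
            rwa [he] at this
          · have hL : L = 2 ^ (m + 1) := le_antisymm hc hm1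
            have := ihm.2 (by omega) (by omega)
            have he : L - 2 ^ m = 2 ^ m := by
              have := pow_succ 2 m
              omega
            rwa [he] at this
        have hfulltail := (IH (2 ^ m) (by omega) (tailSeq g (2 ^ m)) htail).1 m le_rfl
        have hsplit : (2 : ℕ) ^ (m + 1) = 2 ^ m + 2 ^ m := by
          have := pow_succ 2 m
          omega
        rw [hsplit, Finset.prod_range_add, hfm z]
        have e4 : ∏ j ∈ Finset.range (2 ^ m), (z - g (2 ^ m + j)) = z ^ 2 ^ m + 1 := by
          calc ∏ j ∈ Finset.range (2 ^ m), (z - g (2 ^ m + j))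
              = ∏ j ∈ Finset.range (2 ^ m),
                  (g (2 ^ m) * ((starRingEnd ℂ) (g (2 ^ m)) * z - tailSeq g (2 ^ m) j)) := by
                refine Finset.prod_congr rfl fun j _ => ?_
                rw [hg_eq j, mul_sub, ← mul_assoc, hrc, one_mul]
            _ = g (2 ^ m) ^ 2 ^ m *
                  ∏ j ∈ Finset.range (2 ^ m),
                    ((starRingEnd ℂ) (g (2 ^ m)) * z - tailSeq g (2 ^ m) j) := by
                rw [Finset.prod_mul_distrib, Finset.prod_const, Finset.card_range]
            _ = g (2 ^ m) ^ 2 ^ m * (((starRingEnd ℂ) (g (2 ^ m)) * z) ^ 2 ^ m - 1) := by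
                rw [hfulltail]
            _ = (g (2 ^ m) * (starRingEnd ℂ) (g (2 ^ m))) ^ 2 ^ m * z ^ 2 ^ m
                  - g (2 ^ m) ^ 2 ^ m := by
                rw [mul_pow, mul_pow]
                ring
            _ = z ^ 2 ^ m + 1 := by
                rw [hrc, hrot]
                ring
        rw [e4]
        have e5 : z ^ 2 ^ m * z ^ 2 ^ m = z ^ (2 ^ m + 2 ^ m) := (pow_add z _ _).symm
        calc (z ^ 2 ^ m - 1) * (z ^ 2 ^ m + 1) = z ^ 2 ^ m * z ^ 2 ^ m - 1 := by ring
          _ = z ^ (2 ^ m + 2 ^ m) - 1 := by rw [e5]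
      exact ⟨fullsucc, fun h1 h2 => tails_of_full (m + 1) h1 h2 (fullsucc h1.le)⟩
  refine ⟨fun m hm => (ft m).1 hm, fun m h1 h2 => (ft m).2 h1 h2, ?_⟩
  -- Deep
  intro hL1
  have hL0 : L ≠ 0 := by omega
  set m0 := Nat.log 2 L with hm0
  have hp1 : 2 ^ m0 ≤ L := Nat.pow_log_le_self 2 hL0
  have hp2 : L < 2 ^ (m0 + 1) := Nat.lt_pow_succ_log_self (by norm_num) L
  have F := (ft m0).1 hp1
  rcases eq_or_lt_of_le hp1 with hE | hlt
  · -- L = 2^m0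
    obtain ⟨ζ, hζ1, hζ2⟩ := exists_pow_eq_neg_one (2 ^ m0) (pow_pos (by norm_num : (0:ℕ) < 2) m0)
    refine ⟨ζ, m0, hp1, hζ1, le_of_eq hζ2, ?_⟩
    intro z hz
    have e1 : ∀ w : ℂ, ∏ j ∈ Finset.range L, Complex.abs (w - g j)
        = Complex.abs (w ^ 2 ^ m0 - 1) := by
      intro w
      rw [← hE, ← map_prod, F]
    rw [e1, e1, hζ1]
    have : Complex.abs (-1 - 1 : ℂ) = 2 := by norm_num
    rw [this]
    exact abs_pow_sub_one_le hz _
  · -- 2^m0 < L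
    have hMpos : 0 < 2 ^ m0 := pow_pos (by norm_num : (0:ℕ) < 2) m0
    have hrot := rot m0 hlt F
    have hrabs : Complex.abs (g (2 ^ m0)) = 1 := abs_eq_one_of_pow_neg_one hMpos hrot
    have hrc : g (2 ^ m0) * (starRingEnd ℂ) (g (2 ^ m0)) = 1 := by
      rw [Complex.mul_conj]
      norm_cast
      rw [Complex.normSq_eq_abs, hrabs]
      norm_num
    have hg_eq : ∀ j, g (2 ^ m0 + j) = g (2 ^ m0) * tailSeq g (2 ^ m0) j := by
      intro j
      simp only [tailSeq]
      rw [← mul_assoc, hrc, one_mul]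
    have htail : LejaTup (tailSeq g (2 ^ m0)) (L - 2 ^ m0) :=
      (ft m0).2 hlt (by omega)
    obtain ⟨_, _, DeepT⟩ := IH (L - 2 ^ m0) (by omega) _ htail
    obtain ⟨ζt, μ, hμ, hζtpow, hζtabs, hζtmax⟩ := DeepT (by omega)
    have hμm0 : μ < m0 := by
      have h1 : (2 : ℕ) ^ μ < 2 ^ m0 := by omega
      exact (Nat.pow_lt_pow_iff_right (by norm_num)).mp h1
    have hζtM : ζt ^ 2 ^ m0 = 1 := pow_two_pow_eq_one hμm0 hζtpow
    refine ⟨g (2 ^ m0) * ζt, m0, hp1, ?_, ?_, ?_⟩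
    · rw [mul_pow, hrot, hζtM, mul_one]
    · rw [map_mul, hrabs, one_mul]
      exact hζtabs
    · intro z hz
      have split : ∀ w : ℂ,
          ∏ j ∈ Finset.range L, Complex.abs (w - g j)
            = Complex.abs (w ^ 2 ^ m0 - 1) *
              ∏ j ∈ Finset.range (L - 2 ^ m0),
                Complex.abs ((starRingEnd ℂ) (g (2 ^ m0)) * w - tailSeq g (2 ^ m0) j) := by
        intro w
        have hpr := Finset.prod_range_add (fun j => Complex.abs (w - g j)) (2 ^ m0) (L - 2 ^ m0)
        rw [show 2 ^ m0 + (L - 2 ^ m0) = L from by omega] at hpr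
        rw [hpr]
        congr 1
        · rw [← map_prod, F]
        · refine Finset.prod_congr rfl fun j _ => ?_
          rw [hg_eq j, show g (2 ^ m0) * tailSeq g (2 ^ m0) j = g (2 ^ m0) * tailSeq g (2 ^ m0) j from rfl]
          calc Complex.abs (w - g (2 ^ m0) * tailSeq g (2 ^ m0) j)
              = Complex.abs (g (2 ^ m0) * ((starRingEnd ℂ) (g (2 ^ m0)) * w - tailSeq g (2 ^ m0) j)) := by
                congr 1
                rw [mul_sub, ← mul_assoc, hrc, one_mul]
            _ = Complex.abs ((starRingEnd ℂ) (g (2 ^ m0)) * w - tailSeq g (2 ^ m0) j) := by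
                rw [map_mul, hrabs, one_mul]
      rw [split z, split (g (2 ^ m0) * ζt)]
      have hζ'e : (starRingEnd ℂ) (g (2 ^ m0)) * (g (2 ^ m0) * ζt) = ζt := by
        rw [← mul_assoc, mul_comm ((starRingEnd ℂ) (g (2 ^ m0))) (g (2 ^ m0)), hrc, one_mul]
      rw [hζ'e]
      have habs2 : Complex.abs ((g (2 ^ m0) * ζt) ^ 2 ^ m0 - 1) = 2 := by
        rw [mul_pow, hrot, hζtM, mul_one]
        norm_num
      rw [habs2]
      have hz' : Complex.abs ((starRingEnd ℂ) (g (2 ^ m0)) * z) ≤ 1 := by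
        rw [map_mul, Complex.abs_conj, hrabs, one_mul]
        exact hz
      refine mul_le_mul (abs_pow_sub_one_le hz _) (hζtmax _ hz') ?_ (by norm_num)
      exact Finset.prod_nonneg fun j _ => Complex.abs.nonneg _




def off (n : ℕ → ℕ) (j : ℕ) : ℕ := ∑ i ∈ Finset.range j, 2 ^ (n i)

theorem off_succ (n : ℕ → ℕ) (j : ℕ) : off n (j + 1) = off n j + 2 ^ (n j) :=
  Finset.sum_range_succ _ j

theorem off_shift (n : ℕ → ℕ) (i : ℕ) :
    off n (i + 1) = 2 ^ (n 0) + off (fun q => n (q + 1)) i := by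
  have := Finset.sum_range_succ' (fun q => 2 ^ (n q)) i
  simpa [off, add_comm] using this

theorem sum_two_pow_lt : ∀ (r : ℕ) (n : ℕ → ℕ), (∀ j < r, n (j + 1) < n j) →
    ∑ j ∈ Finset.range (r + 1), 2 ^ (n j) < 2 ^ (n 0 + 1) := by
  intro r
  induction r with
  | zero =>
    intro n _
    rw [Finset.sum_range_one]
    have : (2:ℕ) ^ (n 0 + 1) = 2 ^ (n 0) * 2 := pow_succ 2 (n 0)
    have h2 : 0 < (2:ℕ) ^ (n 0) := pow_pos (by norm_num) _
    omega
  | succ r ihr =>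
    intro n hdec
    have hsp := Finset.sum_range_succ' (fun q => (2:ℕ) ^ (n q)) (r + 1)
    have ih : ∑ j ∈ Finset.range (r + 1), 2 ^ (n (j + 1)) < 2 ^ (n 1 + 1) := by
      simpa using ihr (fun q => n (q + 1)) (fun j hj => hdec (j + 1) (by omega))
    have h10 : n 1 + 1 ≤ n 0 := by
      have h := hdec 0 (by omega)
      norm_num at h
      omega
    have hmono : (2:ℕ) ^ (n 1 + 1) ≤ 2 ^ (n 0) := Nat.pow_le_pow_right (by norm_num) h10
    have hps : (2:ℕ) ^ (n 0 + 1) = 2 ^ (n 0) * 2 := pow_succ 2 (n 0)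
    omega

theorem find_block (n : ℕ → ℕ) : ∀ (k s : ℕ), s < off n k →
    ∃ j, j < k ∧ off n j ≤ s ∧ s < off n j + 2 ^ (n j) := by
  intro k
  induction k with
  | zero => intro s hs; simp [off] at hs
  | succ k ihk =>
    intro s hs
    rcases Nat.lt_or_ge s (off n k) with h | h
    · obtain ⟨j, hj1, hj2, hj3⟩ := ihk s h
      exact ⟨j, by omega, hj2, hj3⟩
    · refine ⟨k, by omega, h, ?_⟩
      rw [off_succ] at hs
      omega

theorem blocks : ∀ (r : ℕ) (n : ℕ → ℕ), (∀ j < r, n (j + 1) < n j) →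
    ∀ g : ℕ → ℂ, LejaTup g (∑ j ∈ Finset.range (r + 1), 2 ^ (n j)) →
    ∀ j, j < r + 1 → ∃ ρ : ℂ, Complex.abs ρ = 1 ∧
      ∀ z : ℂ, ∏ i ∈ Finset.Ico (off n j) (off n j + 2 ^ (n j)), (z - g i)
        = z ^ 2 ^ (n j) - ρ := by
  intro r
  induction r with
  | zero =>
    intro n _ g hg j hj
    have hj0 : j = 0 := by omega
    subst hj0
    refine ⟨1, by norm_num, ?_⟩
    intro z
    have hL : 2 ^ (n 0) ≤ ∑ j ∈ Finset.range 1, 2 ^ (n j) := by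
      rw [Finset.sum_range_one]
    have F := (comb _ g hg).1 (n 0) hL z
    have hoff : off n 0 = 0 := by simp [off]
    rw [hoff, zero_add, ← Finset.range_eq_Ico]
    exact F
  | succ r ihr =>
    intro n hdec g hg j hj
    set M := 2 ^ (n 0) with hM
    set L' := ∑ q ∈ Finset.range (r + 1), 2 ^ (n (q + 1)) with hL'
    have hsp : ∑ q ∈ Finset.range (r + 2), 2 ^ (n q) = M + L' := by
      have := Finset.sum_range_succ' (fun q => (2:ℕ) ^ (n q)) (r + 1)
      rw [this]
      omega
    have hL'pos : 0 < L' := by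
      have h1 : (2:ℕ) ^ (n (0+1)) ≤ L' := by
        rw [hL']
        refine Finset.single_le_sum (f := fun q => (2:ℕ) ^ (n (q+1))) ?_ ?_
        · intro i _; positivity
        · exact Finset.mem_range.mpr (by omega)
      have h2 : 0 < 2 ^ (n (0+1)) := Nat.pow_pos (by norm_num)
      omega
    have hL'lt : L' < M := by
      have h1 : ∑ q ∈ Finset.range (r + 1), 2 ^ (n (q + 1)) < 2 ^ (n 1 + 1) := by
        simpa using sum_two_pow_lt r (fun q => n (q + 1)) (fun q hq => hdec (q + 1) (by omega))
      have h10 : n 1 + 1 ≤ n 0 := by have h := hdec 0 (by omega); norm_num at h; omega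
      have h2 : (2:ℕ) ^ (n 1 + 1) ≤ 2 ^ (n 0) := Nat.pow_le_pow_right (by norm_num) h10
      simp only [hL', hM]
      omega
    have hgtot := hg
    rw [hsp] at hgtot
    have hC := comb (M + L') g hgtot
    have htails := hC.2.1 (n 0) (by omega) (by
      have : (2:ℕ) ^ (n 0 + 1) = M * 2 := pow_succ 2 (n 0)
      omega)
    rw [show M + L' - 2 ^ (n 0) = L' from by omega] at htails
    -- |rho0| = 1
    have hρ0 : (starRingEnd ℂ) (g M) * g M = 1 := by
      have h0 := htails.1
      simpa [tailSeq] using h0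
    have hrc : g M * (starRingEnd ℂ) (g M) = 1 := by rw [mul_comm]; exact hρ0
    have hrabs : Complex.abs (g M) = 1 := by
      have h1 : Complex.normSq (g M) = 1 := by
        have := Complex.mul_conj (g M)
        rw [hrc] at this
        exact_mod_cast this.symm
      have := Complex.normSq_eq_abs (g M)
      nlinarith [Complex.abs.nonneg (g M)]
    have hg_eq : ∀ q, g (M + q) = g M * tailSeq g M q := by
      intro q
      simp only [tailSeq]
      rw [← mul_assoc, hrc, one_mul]
    rcases Nat.eq_zero_or_pos j with hj0 | hjpos
    · subst hj0
      refine ⟨1, by norm_num, ?_⟩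
      intro z
      have F := hC.1 (n 0) (by omega) z
      have hoff : off n 0 = 0 := by simp [off]
      rw [hoff, zero_add, ← Finset.range_eq_Ico]
      exact F
    · obtain ⟨i, hi⟩ : ∃ i, j = i + 1 := ⟨j - 1, by omega⟩
      subst hi
      obtain ⟨ρ', hρ'1, hρ'2⟩ := ihr (fun q => n (q + 1)) (fun q hq => hdec (q + 1) (by omega))
        (tailSeq g M) (by rwa [hL'] at htails) i (by omega)
      refine ⟨g M ^ 2 ^ (n (i + 1)) * ρ', by rw [map_mul, map_pow, hrabs, hρ'1]; norm_num, ?_⟩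
      intro z
      set a := off (fun q => n (q + 1)) i with ha
      set N := 2 ^ (n (i + 1)) with hN
      have hoffj : off n (i + 1) = M + a := off_shift n i
      have e1 : ∏ p ∈ Finset.Ico (off n (i + 1)) (off n (i + 1) + N), (z - g p)
          = ∏ q ∈ Finset.range N, (z - g (M + (a + q))) := by
        rw [hoffj]
        rw [Finset.prod_Ico_eq_prod_range]
        rw [show M + a + N = (M + a) + N from by ring, Nat.add_sub_cancel_left]
        refine Finset.prod_congr rfl fun q _ => ?_
        rw [Nat.add_assoc]
      have e2 : ∏ q ∈ Finset.Ico a (a + N), ((starRingEnd ℂ) (g M) * z - tailSeq g M q)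
          = ((starRingEnd ℂ) (g M) * z) ^ N - ρ' := hρ'2 _
      have e3 : ∏ q ∈ Finset.Ico a (a + N), ((starRingEnd ℂ) (g M) * z - tailSeq g M q)
          = ∏ q ∈ Finset.range N, ((starRingEnd ℂ) (g M) * z - tailSeq g M (a + q)) := by
        rw [Finset.prod_Ico_eq_prod_range]
        rw [Nat.add_sub_cancel_left]
      rw [e1]
      have e4 : ∀ q, z - g (M + (a + q)) = g M * ((starRingEnd ℂ) (g M) * z - tailSeq g M (a + q)) := by
        intro q
        rw [hg_eq (a + q), mul_sub, ← mul_assoc, hrc, one_mul]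
      calc ∏ q ∈ Finset.range N, (z - g (M + (a + q)))
          = ∏ q ∈ Finset.range N, (g M * ((starRingEnd ℂ) (g M) * z - tailSeq g M (a + q))) := by
            exact Finset.prod_congr rfl fun q _ => e4 q
        _ = g M ^ N * ∏ q ∈ Finset.range N, ((starRingEnd ℂ) (g M) * z - tailSeq g M (a + q)) := by
            rw [Finset.prod_mul_distrib, Finset.prod_const, Finset.card_range]
        _ = g M ^ N * (((starRingEnd ℂ) (g M) * z) ^ N - ρ') := by rw [← e3, e2]
        _ = (g M * (starRingEnd ℂ) (g M)) ^ N * z ^ N - g M ^ N * ρ' := by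
            rw [mul_pow, mul_pow]; ring
        _ = z ^ N - g M ^ N * ρ' := by rw [hrc]; norm_num




theorem inner2_eq (x y : ℂ) : inner2 x y = ((starRingEnd ℂ) x * y).re := by
  simp [inner2, Complex.mul_re]

theorem prod_zpow' {b : ℝ} (hb : b ≠ 0) (T : Finset ℕ) (k : ℕ → ℤ) :
    ∏ j ∈ T, b ^ (k j) = b ^ (∑ j ∈ T, k j) := by
  classical
  induction T using Finset.induction with
  | empty => simp
  | insert _ _ hnot ih =>
    rw [Finset.prod_insert hnot, Finset.sum_insert hnot, ih, zpow_add₀ hb]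

theorem abs_diff_le_two {A B : ℂ} (hA : Complex.abs A ≤ 1) (hB : Complex.abs B ≤ 1) :
    Complex.abs (A - B) ≤ 2 := by
  calc Complex.abs (A - B) ≤ Complex.abs A + Complex.abs B := by
        rw [sub_eq_add_neg]
        refine le_trans (Complex.abs.add_le _ _) ?_
        simp
    _ ≤ 2 := by linarith

theorem stmt14 (e : ℕ → ℂ) (he : IsLejaSeq e) (d r : ℕ) (n : ℕ → ℕ)
    (hd : 2 ≤ d) (hdec : ∀ j < r, n (j + 1) < n j)
    (hbin : d = ∑ j ∈ Finset.range (r + 1), 2 ^ (n j))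
    (s t : ℕ) (hst : s < t) (ht : t < d)
    (x : ℂ) (hx : ‖x‖ ≤ 1) :
    |hPoly d s t e (inner2 (Complex.I * (e s - e t)) x)| ≤
      2 ^ (2 * r + 1) * d * ‖e s - e t‖ ^ ((d : ℤ) - 2) / 2 ^ (d - 2) := by
  classical
  simp only [IsLejaSeq, ← Complex.abs_apply'] at he hx ⊢
  obtain ⟨he0, hle, hmax⟩ := he
  -- RHS is nonnegative
  have hRHSnn : 0 ≤ 2 ^ (2 * r + 1) * (d : ℝ) * Complex.abs (e s - e t) ^ ((d : ℤ) - 2) / 2 ^ (d - 2) := by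
    have h1 : (0:ℝ) ≤ Complex.abs (e s - e t) ^ ((d : ℤ) - 2) :=
      zpow_nonneg (Complex.abs.nonneg _) _
    positivity
  have hsd : s < d := lt_trans hst ht
  have hts : t ≠ s := Nat.ne_of_gt hst
  have htmem : t ∈ (Finset.range d).erase s :=
    Finset.mem_erase.mpr ⟨hts, Finset.mem_range.mpr ht⟩
  -- trivial case u = 0
  by_cases hu0 : e s - e t = 0
  · have hz : hPoly d s t e (inner2 (Complex.I * (e s - e t)) x) = 0 := by
      unfold hPoly
      refine Finset.prod_eq_zero htmem ?_
      rw [hu0]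
      simp [inner2]
    rw [hz, abs_zero]
    exact hRHSnn
  -- main case
  have hLT : LejaTup e d := ⟨he0, fun j _ => hle j, fun d' h1 _ z hz => hmax d' h1 z hz⟩
  have hLT2 : LejaTup e (∑ j ∈ Finset.range (r + 1), 2 ^ (n j)) := by rwa [← hbin]
  have hbl := blocks r n hdec e hLT2
  choose! ρ hρabs hρeq using hbl
  set B : ℕ → Finset ℕ := fun j => Finset.Ico (off n j) (off n j + 2 ^ (n j)) with hB
  have hoffd : off n (r + 1) = d := by rw [hbin]; rfl
  have hoffmono : ∀ a b : ℕ, a ≤ b → off n a ≤ off n b := by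
    intro a b hab
    exact Finset.sum_le_sum_of_subset (Finset.range_subset_range.mpr hab)
  have hBsub : ∀ j, j < r + 1 → ∀ m ∈ B j, m < d := by
    intro j hj m hm
    rw [hB, Finset.mem_Ico] at hm
    have h1 : off n j + 2 ^ (n j) = off n (j + 1) := (off_succ n j).symm
    have h2 : off n (j + 1) ≤ off n (r + 1) := hoffmono _ _ (by omega)
    omega
  have hfind : ∀ m, m < d → ∃ j, j < r + 1 ∧ m ∈ B j := by
    intro m hm
    obtain ⟨j, hj1, hj2, hj3⟩ := find_block n (r + 1) m (by rwa [hoffd])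
    exact ⟨j, hj1, by rw [hB, Finset.mem_Ico]; exact ⟨hj2, hj3⟩⟩
  have hNpos : ∀ j : ℕ, 0 < 2 ^ (n j) := fun j => pow_pos (by norm_num) _
  -- all points unimodular
  have hone : ∀ m, m < d → Complex.abs (e m) = 1 := by
    intro m hm
    obtain ⟨j, hj1, hj2⟩ := hfind m hm
    have h0 : (0:ℂ) = e m ^ 2 ^ (n j) - ρ j := by
      rw [← hρeq j hj1 (e m)]
      exact (Finset.prod_eq_zero hj2 (by ring)).symm
    have h1 : e m ^ 2 ^ (n j) = ρ j := by linear_combination -h0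
    have h2 : Complex.abs (e m) ^ 2 ^ (n j) = 1 := by
      rw [← map_pow, h1, hρabs j hj1]
    exact real_pow_eq_one (Complex.abs.nonneg _) (hNpos j) h2
  -- disjointness of blocks
  have hdisj : ∀ i j : ℕ, i < r + 1 → j < r + 1 → i ≠ j → Disjoint (B i) (B j) := by
    intro i j _ _ hij
    rw [Finset.disjoint_left]
    intro a hai haj
    rw [hB, Finset.mem_Ico] at hai haj
    rcases Nat.lt_or_ge i j with hlt | hge
    · have h1 : off n (i + 1) ≤ off n j := hoffmono _ _ (by omega)
      have h2 := off_succ n i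
      omega
    · have hlt : j < i := by omega
      have h1 : off n (j + 1) ≤ off n i := hoffmono _ _ (by omega)
      have h2 := off_succ n j
      omega
  -- the block containing s
  obtain ⟨j0, hj0r, hj0mem⟩ := hfind s hsd
  set U : ℝ := Complex.abs (e s - e t) with hU
  have hUpos : 0 < U := by
    rw [hU]
    exact Complex.abs.pos hu0
  have hUle2 : U ≤ 2 := by
    rw [hU]
    exact abs_diff_le_two (hle s) (hle t)
  set c : ℂ := (starRingEnd ℂ) (Complex.I * (e s - e t)) with hc
  have hcabs : Complex.abs c = U := by
    rw [hc, Complex.abs_conj, map_mul, Complex.abs_I, one_mul]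
  have hc0 : c ≠ 0 := by
    intro h
    rw [h, map_zero] at hcabs
    linarith
  -- the evaluation point
  set W : ℝ := inner2 (Complex.I * (e s - e t)) x with hWdef
  have hWre : W = (c * x).re := inner2_eq _ _
  have hWle : |W| ≤ U := by
    rw [hWre]
    calc |(c * x).re| ≤ Complex.abs (c * x) := Complex.abs_re_le_abs _
      _ = U * Complex.abs x := by rw [map_mul, hcabs]
      _ ≤ U * 1 := by
          refine mul_le_mul_of_nonneg_left hx (le_of_lt hUpos)
      _ = U := mul_one U
  -- the two roots
  set sq : ℝ := Real.sqrt (U ^ 2 - W ^ 2) with hsqdef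
  have hsq2 : sq ^ 2 = U ^ 2 - W ^ 2 := by
    rw [hsqdef]
    refine Real.sq_sqrt ?_
    have : W ^ 2 ≤ U ^ 2 := by nlinarith [abs_nonneg W, neg_abs_le W, le_abs_self W]
    linarith
  set zp : ℂ := ((W : ℂ) + (sq : ℂ) * Complex.I) / c with hzpdef
  set zm : ℂ := ((W : ℂ) - (sq : ℂ) * Complex.I) / c with hzmdef
  have habsWsq : ∀ (ε : ℝ), ε = 1 ∨ ε = -1 → Complex.abs ((W : ℂ) + (ε * sq : ℝ) * Complex.I) = U := by
    intro ε hε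
    rw [Complex.abs_apply]
    have h1 : Complex.normSq ((W : ℂ) + ((ε * sq : ℝ) : ℂ) * Complex.I) = W ^ 2 + (ε * sq) ^ 2 := by
      rw [Complex.normSq_add_mul_I]
    rw [h1]
    have h2 : (ε * sq) ^ 2 = sq ^ 2 := by rcases hε with h | h <;> rw [h] <;> ring
    rw [h2, hsq2]
    rw [show W ^ 2 + (U ^ 2 - W ^ 2) = U ^ 2 from by ring]
    exact Real.sqrt_sq (le_of_lt hUpos)
  have habszp : Complex.abs zp = 1 := by
    rw [hzpdef, map_div₀, hcabs]
    have := habsWsq 1 (Or.inl rfl)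
    rw [show ((1 * sq : ℝ) : ℂ) = (sq : ℂ) from by push_cast; ring] at this
    rw [this]
    field_simp
  have habszm : Complex.abs zm = 1 := by
    rw [hzmdef, map_div₀, hcabs]
    have h := habsWsq (-1) (Or.inr rfl)
    rw [show (((-1 : ℝ) * sq : ℝ) : ℂ) = -(sq : ℂ) from by push_cast; ring] at h
    rw [show (W : ℂ) - (sq : ℂ) * Complex.I = (W : ℂ) + -(sq : ℂ) * Complex.I from by ring]
    rw [h]
    field_simp
  have hczp : c * zp = (W : ℂ) + (sq : ℂ) * Complex.I := by
    rw [hzpdef, mul_div_cancel₀ _ hc0]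
  have hczm : c * zm = (W : ℂ) - (sq : ℂ) * Complex.I := by
    rw [hzmdef, mul_div_cancel₀ _ hc0]
  have hsum : c * (zp + zm) = 2 * (W : ℂ) := by
    rw [mul_add, hczp, hczm]
    ring
  have hU2C : ((W : ℂ) + (sq : ℂ) * Complex.I) * ((W : ℂ) - (sq : ℂ) * Complex.I) = (U ^ 2 : ℝ) := by
    have h1 : ((W : ℂ) + (sq : ℂ) * Complex.I) * ((W : ℂ) - (sq : ℂ) * Complex.I)
        = (W : ℂ) ^ 2 + (sq : ℂ) ^ 2 := by
      linear_combination (-(sq:ℂ)^2) * Complex.I_sq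
    have h2 : W ^ 2 + sq ^ 2 = U ^ 2 := by rw [hsq2]; ring
    calc ((W : ℂ) + (sq : ℂ) * Complex.I) * ((W : ℂ) - (sq : ℂ) * Complex.I)
        = (W : ℂ) ^ 2 + (sq : ℂ) ^ 2 := h1
      _ = ((W ^ 2 + sq ^ 2 : ℝ) : ℂ) := by push_cast; ring
      _ = ((U ^ 2 : ℝ) : ℂ) := by rw [h2]
  have hprod : c * (zp * zm) = (starRingEnd ℂ) c := by
    apply mul_left_cancel₀ hc0
    calc c * (c * (zp * zm)) = (c * zp) * (c * zm) := by ring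
      _ = (U ^ 2 : ℝ) := by rw [hczp, hczm]; exact hU2C
      _ = c * (starRingEnd ℂ) c := by
          rw [Complex.mul_conj, Complex.normSq_eq_abs, hcabs]
  have hquad : ∀ z : ℂ, c * ((z - zp) * (z - zm)) = c * z ^ 2 - 2 * (W : ℂ) * z + (starRingEnd ℂ) c := by
    intro z
    have h1 : c * ((z - zp) * (z - zm)) = c * z ^ 2 - (c * (zp + zm)) * z + c * (zp * zm) := by
      ring
    rw [h1, hsum, hprod]
  -- distance sum lower bound at e s
  have hes1 : Complex.abs (e s) = 1 := hone s hsd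
  have hesconj : e s * (starRingEnd ℂ) (e s) = 1 := by
    rw [Complex.mul_conj, Complex.normSq_eq_abs, hes1]
    norm_num
  have hIm : (c * e s).im = -(U ^ 2) / 2 := by
    have h1 : c * e s = -Complex.I * (1 - (starRingEnd ℂ) (e t) * e s) := by
      rw [hc]
      rw [map_mul, Complex.conj_I, map_sub]
      have : (starRingEnd ℂ) (e s) * e s = 1 := by rw [mul_comm]; exact hesconj
      calc -Complex.I * ((starRingEnd ℂ) (e s) - (starRingEnd ℂ) (e t)) * e s
          = -Complex.I * ((starRingEnd ℂ) (e s) * e s - (starRingEnd ℂ) (e t) * e s) := by ring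
        _ = -Complex.I * (1 - (starRingEnd ℂ) (e t) * e s) := by rw [this]
    rw [h1]
    have h2 : ∀ ζ : ℂ, (-Complex.I * ζ).im = -ζ.re := by
      intro ζ
      simp [Complex.mul_im]
    rw [h2]
    have h3 : U ^ 2 = 2 - 2 * ((starRingEnd ℂ) (e t) * e s).re := by
      have hns : Complex.normSq (e s - e t) = U ^ 2 := by
        rw [← Complex.sq_abs, hU]
      have h4 : Complex.normSq (e s - e t)
          = Complex.normSq (e s) + Complex.normSq (e t) - 2 * (e s * (starRingEnd ℂ) (e t)).re := by
        rw [Complex.normSq_sub]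
      have h5 : Complex.normSq (e s) = 1 := by
        rw [Complex.normSq_eq_abs, hes1]; norm_num
      have h6 : Complex.normSq (e t) = 1 := by
        rw [Complex.normSq_eq_abs, hone t ht]; norm_num
      have h7 : (e s * (starRingEnd ℂ) (e t)).re = ((starRingEnd ℂ) (e t) * e s).re := by
        rw [mul_comm]
      rw [h4, h5, h6, h7] at hns
      linarith
    have h8 : (1 - (starRingEnd ℂ) (e t) * e s).re = 1 - ((starRingEnd ℂ) (e t) * e s).re := by
      simp
    rw [h8]
    linarith
  have hsum_dist : U ≤ Complex.abs (e s - zp) + Complex.abs (e s - zm) := by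
    have kk : c * (e s) ^ 2 - (starRingEnd ℂ) c = c * (e s * (e s - zp) + zp * (e s - zm)) := by
      have h1 : c * (e s * (e s - zp) + zp * (e s - zm)) = c * (e s) ^ 2 - c * (zp * zm) := by ring
      rw [h1, hprod]
    have kk2 : c * (e s) ^ 2 - (starRingEnd ℂ) c = e s * (c * e s - (starRingEnd ℂ) (c * e s)) := by
      have h9 : e s * (c * e s - (starRingEnd ℂ) c * (starRingEnd ℂ) (e s))
          = c * (e s) ^ 2 - (starRingEnd ℂ) c := by
        calc e s * (c * e s - (starRingEnd ℂ) c * (starRingEnd ℂ) (e s))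
            = c * (e s) ^ 2 - (e s * (starRingEnd ℂ) (e s)) * (starRingEnd ℂ) c := by ring
          _ = c * (e s) ^ 2 - (starRingEnd ℂ) c := by rw [hesconj]; ring
      rw [map_mul]
      exact h9.symm
    have habs1 : Complex.abs (c * (e s) ^ 2 - (starRingEnd ℂ) c) = U ^ 2 := by
      rw [kk2, map_mul, hes1, one_mul]
      rw [Complex.sub_conj, hIm]
      rw [map_mul, Complex.abs_I, mul_one, Complex.abs_ofReal]
      rw [show (2 * (-(U ^ 2) / 2) : ℝ) = -(U^2) from by ring]
      rw [abs_neg, abs_of_pos (by positivity)]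
    have habs2 : Complex.abs (c * (e s * (e s - zp) + zp * (e s - zm)))
        ≤ U * (Complex.abs (e s - zp) + Complex.abs (e s - zm)) := by
      rw [map_mul, hcabs]
      refine mul_le_mul_of_nonneg_left ?_ (le_of_lt hUpos)
      refine le_trans (Complex.abs.add_le _ _) ?_
      rw [map_mul, map_mul, hes1, habszp, one_mul, one_mul]
    have := kk ▸ habs1
    nlinarith [this, habs2, hUpos]

  -- choose ordering of roots so that z2 is far from e s
  obtain ⟨z1, z2, habsz1, habsz2, hqd, hfar⟩ :
      ∃ z1 z2 : ℂ, Complex.abs z1 = 1 ∧ Complex.abs z2 = 1 ∧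
        (∀ ε : ℂ, c * ((ε - z1) * (ε - z2)) = c * ε ^ 2 - 2 * (W : ℂ) * ε + (starRingEnd ℂ) c) ∧
        U / 2 ≤ Complex.abs (e s - z2) := by
    rcases le_or_gt (U / 2) (Complex.abs (e s - zm)) with hch | hch
    · exact ⟨zp, zm, habszp, habszm, hquad, hch⟩
    · refine ⟨zm, zp, habszm, habszp, ?_, by linarith⟩
      intro ε
      rw [← hquad ε]
      ring
  -- factor identity
  have hfact : ∀ ε : ℂ, Complex.abs ε = 1 →
      |W - (c * ε).re| = U / 2 * (Complex.abs (ε - z1) * Complex.abs (ε - z2)) := by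
    intro ε hε
    have hεc : ε * (starRingEnd ℂ) ε = 1 := by
      rw [Complex.mul_conj, Complex.normSq_eq_abs, hε]
      norm_num
    have key : ((W - (c * ε).re : ℝ) : ℂ) * (-2 * ε) = c * ((ε - z1) * (ε - z2)) := by
      rw [hqd ε]
      have h2re : (((c * ε).re : ℝ) : ℂ) * 2 = c * ε + (starRingEnd ℂ) (c * ε) := by
        rw [Complex.add_conj]
        push_cast
        ring
      have h3 : (starRingEnd ℂ) (c * ε) * ε = (starRingEnd ℂ) c := by
        rw [map_mul]
        calc (starRingEnd ℂ) c * (starRingEnd ℂ) ε * ε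
            = (starRingEnd ℂ) c * ((starRingEnd ℂ) ε * ε) := by ring
          _ = (starRingEnd ℂ) c := by rw [mul_comm ((starRingEnd ℂ) ε) ε, hεc, mul_one]
      push_cast
      calc ((W : ℂ) - ((c * ε).re : ℂ)) * (-2 * ε)
          = -2 * (W : ℂ) * ε + ((((c * ε).re : ℝ) : ℂ) * 2) * ε := by push_cast; ring
        _ = -2 * (W : ℂ) * ε + (c * ε + (starRingEnd ℂ) (c * ε)) * ε := by rw [h2re]
        _ = c * ε ^ 2 - 2 * (W : ℂ) * ε + (starRingEnd ℂ) (c * ε) * ε := by ring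
        _ = c * ε ^ 2 - 2 * (W : ℂ) * ε + (starRingEnd ℂ) c := by rw [h3]
    have h := congrArg Complex.abs key
    rw [map_mul, map_mul, Complex.abs_ofReal, map_mul, hε, mul_one, hcabs] at h
    have h4 : Complex.abs (-2 : ℂ) = 2 := by norm_num
    rw [h4, map_mul] at h
    linarith
  -- the projections of e s and e t coincide
  have hre_st : (c * e t).re = (c * e s).re := by
    have h2 : c * (e s - e t)
        = -Complex.I * ((Complex.normSq (Complex.I * (e s - e t)) : ℝ) : ℂ) := by
      rw [hc, ← Complex.mul_conj (Complex.I * (e s - e t))]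
      linear_combination ((starRingEnd ℂ) (Complex.I * (e s - e t)) * (e s - e t)) * Complex.I_sq
    have h3 : (c * (e s - e t)).re = 0 := by
      rw [h2]
      simp
    have h4 : (c * e s - c * e t).re = 0 := by
      rw [← mul_sub]
      exact h3
    rw [Complex.sub_re] at h4
    linarith
  -- degenerate case : e s = z1
  by_cases hdeg : e s = z1
  · have h5 : |W - (c * e s).re| = 0 := by
      rw [hfact (e s) hes1, ← hdeg]
      simp
    have hz : hPoly d s t e (inner2 (Complex.I * (e s - e t)) x) = 0 := by
      unfold hPoly
      refine Finset.prod_eq_zero htmem ?_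
      have h6 : inner2 (Complex.I * (e s - e t)) (e t) = (c * e t).re := inner2_eq _ _
      rw [h6, hre_st]
      exact abs_eq_zero.mp h5
    rw [hz, abs_zero]
    exact hRHSnn
  -- main case
  set b : ℝ := U / 2 with hb
  have hbpos : 0 < b := by positivity
  have hb0 : b ≠ 0 := ne_of_gt hbpos
  have hρeqB : ∀ j, j < r + 1 → ∀ z : ℂ, ∏ i ∈ B j, (z - e i) = z ^ 2 ^ (n j) - ρ j := by
    intro j hj z
    rw [hB]
    exact hρeq j hj z
  have hcardB : ∀ j, (B j).card = 2 ^ (n j) := by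
    intro j
    rw [hB]
    simp
  -- full block bound
  have hfull_block : ∀ j, j < r + 1 → ∏ m ∈ B j, |W - (c * e m).re| ≤ 4 * b ^ ((2 ^ (n j) : ℕ) : ℤ) := by
    intro j hj
    have e1 : ∏ m ∈ B j, |W - (c * e m).re|
        = ∏ m ∈ B j, (b * (Complex.abs (e m - z1) * Complex.abs (e m - z2))) := by
      refine Finset.prod_congr rfl fun m hm => ?_
      rw [hfact (e m) (hone m (hBsub j hj m hm)), hb]
    have e2 : ∏ m ∈ B j, Complex.abs (e m - z1) = Complex.abs (z1 ^ 2 ^ (n j) - ρ j) := by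
      calc ∏ m ∈ B j, Complex.abs (e m - z1)
          = ∏ m ∈ B j, Complex.abs (z1 - e m) := by
            exact Finset.prod_congr rfl fun m _ => Complex.abs.map_sub _ _
        _ = Complex.abs (∏ m ∈ B j, (z1 - e m)) := (map_prod Complex.abs _ _).symm
        _ = Complex.abs (z1 ^ 2 ^ (n j) - ρ j) := by rw [hρeqB j hj z1]
    have e3 : ∏ m ∈ B j, Complex.abs (e m - z2) = Complex.abs (z2 ^ 2 ^ (n j) - ρ j) := by
      calc ∏ m ∈ B j, Complex.abs (e m - z2)
          = ∏ m ∈ B j, Complex.abs (z2 - e m) := by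
            exact Finset.prod_congr rfl fun m _ => Complex.abs.map_sub _ _
        _ = Complex.abs (∏ m ∈ B j, (z2 - e m)) := (map_prod Complex.abs _ _).symm
        _ = Complex.abs (z2 ^ 2 ^ (n j) - ρ j) := by rw [hρeqB j hj z2]
    have e4 : Complex.abs (z1 ^ 2 ^ (n j) - ρ j) ≤ 2 := by
      refine abs_diff_le_two ?_ (le_of_eq (hρabs j hj))
      rw [map_pow, habsz1, one_pow]
    have e5 : Complex.abs (z2 ^ 2 ^ (n j) - ρ j) ≤ 2 := by
      refine abs_diff_le_two ?_ (le_of_eq (hρabs j hj))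
      rw [map_pow, habsz2, one_pow]
    rw [e1, Finset.prod_mul_distrib, Finset.prod_const, hcardB j, Finset.prod_mul_distrib, e2, e3]
    rw [zpow_natCast]
    have hbn : (0:ℝ) ≤ b ^ 2 ^ (n j) := by positivity
    have habs2nn := Complex.abs.nonneg (z2 ^ 2 ^ (n j) - ρ j)
    have habs1nn := Complex.abs.nonneg (z1 ^ 2 ^ (n j) - ρ j)
    calc b ^ 2 ^ (n j) * (Complex.abs (z1 ^ 2 ^ (n j) - ρ j) * Complex.abs (z2 ^ 2 ^ (n j) - ρ j))
        ≤ b ^ 2 ^ (n j) * (2 * 2) := by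
          refine mul_le_mul_of_nonneg_left ?_ hbn
          exact mul_le_mul e4 e5 habs2nn (by norm_num)
      _ = 4 * b ^ 2 ^ (n j) := by ring
  -- deficient block
  set N0 : ℕ := 2 ^ (n j0) with hN0
  have hN0pos : 0 < N0 := hNpos j0
  set S0 : Finset ℕ := (B j0).erase s with hS0
  have hρs : ρ j0 = e s ^ N0 := by
    have h0 := hρeqB j0 hj0r (e s)
    have h1 : ∏ i ∈ B j0, (e s - e i) = 0 := Finset.prod_eq_zero hj0mem (by ring)
    rw [h1] at h0
    linear_combination h0
  have hPful : ∀ z : ℂ, (z - e s) * ∏ m ∈ S0, (z - e m) = z ^ N0 - e s ^ N0 := by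
    intro z
    rw [hS0, Finset.mul_prod_erase (B j0) (fun i => z - e i) hj0mem, hρeqB j0 hj0r z, ← hN0, ← hρs]
  have hz1es : z1 - e s ≠ 0 := sub_ne_zero.mpr (fun h => hdeg h.symm)
  have hP1 : Complex.abs (∏ m ∈ S0, (z1 - e m)) ≤ N0 := by
    have hgeo := geom_sum₂_mul z1 (e s) N0
    have h1 : (z1 - e s) * ∏ m ∈ S0, (z1 - e m)
        = (z1 - e s) * ∑ i ∈ Finset.range N0, z1 ^ i * e s ^ (N0 - 1 - i) := by
      rw [hPful z1, ← hgeo]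
      ring
    have h2 : ∏ m ∈ S0, (z1 - e m) = ∑ i ∈ Finset.range N0, z1 ^ i * e s ^ (N0 - 1 - i) :=
      mul_left_cancel₀ hz1es h1
    rw [h2]
    calc Complex.abs (∑ i ∈ Finset.range N0, z1 ^ i * e s ^ (N0 - 1 - i))
        ≤ ∑ i ∈ Finset.range N0, Complex.abs (z1 ^ i * e s ^ (N0 - 1 - i)) :=
          Complex.abs.sum_le _ _
      _ = ∑ _i ∈ Finset.range N0, (1:ℝ) := by
          refine Finset.sum_congr rfl fun i _ => ?_
          rw [map_mul, map_pow, map_pow, habsz1, hes1, one_pow, one_pow, one_mul]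
      _ = N0 := by simp
  have hP2 : Complex.abs (∏ m ∈ S0, (z2 - e m)) * b ≤ 2 := by
    have h1 : Complex.abs (z2 - e s) * Complex.abs (∏ m ∈ S0, (z2 - e m))
        = Complex.abs (z2 ^ N0 - e s ^ N0) := by
      rw [← map_mul, hPful z2]
    have h2 : Complex.abs (z2 ^ N0 - e s ^ N0) ≤ 2 := by
      refine abs_diff_le_two ?_ ?_
      · rw [map_pow, habsz2, one_pow]
      · rw [map_pow, hes1, one_pow]
    have h3 : b ≤ Complex.abs (z2 - e s) := by
      rw [Complex.abs.map_sub, hb]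
      exact hfar
    calc Complex.abs (∏ m ∈ S0, (z2 - e m)) * b
        ≤ Complex.abs (∏ m ∈ S0, (z2 - e m)) * Complex.abs (z2 - e s) :=
          mul_le_mul_of_nonneg_left h3 (Complex.abs.nonneg _)
      _ = Complex.abs (z2 ^ N0 - e s ^ N0) := by rw [mul_comm]; exact h1
      _ ≤ 2 := h2
  have hcardS0 : S0.card = N0 - 1 := by
    rw [hS0, Finset.card_erase_of_mem hj0mem, hcardB j0]
  have hdef_block : ∏ m ∈ S0, |W - (c * e m).re| ≤ 2 * N0 * b ^ ((N0 : ℤ) - 2) := by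
    have e1 : ∏ m ∈ S0, |W - (c * e m).re|
        = b ^ (N0 - 1) *
          (Complex.abs (∏ m ∈ S0, (z1 - e m)) * Complex.abs (∏ m ∈ S0, (z2 - e m))) := by
      calc ∏ m ∈ S0, |W - (c * e m).re|
          = ∏ m ∈ S0, (b * (Complex.abs (e m - z1) * Complex.abs (e m - z2))) := by
            refine Finset.prod_congr rfl fun m hm => ?_
            have hm' : m ∈ (B j0).erase s := by rwa [hS0] at hm
            have hmd : m < d := hBsub j0 hj0r m (Finset.mem_of_mem_erase hm')
            rw [hfact (e m) (hone m hmd), hb]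
        _ = b ^ S0.card *
            ((∏ m ∈ S0, Complex.abs (e m - z1)) * ∏ m ∈ S0, Complex.abs (e m - z2)) := by
            rw [Finset.prod_mul_distrib, Finset.prod_mul_distrib, Finset.prod_const]
        _ = b ^ (N0 - 1) *
            (Complex.abs (∏ m ∈ S0, (z1 - e m)) * Complex.abs (∏ m ∈ S0, (z2 - e m))) := by
            have f1 : ∏ m ∈ S0, Complex.abs (e m - z1)
                = Complex.abs (∏ m ∈ S0, (z1 - e m)) := by
              rw [map_prod]
              exact Finset.prod_congr rfl fun m _ => Complex.abs.map_sub _ _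
            have f2 : ∏ m ∈ S0, Complex.abs (e m - z2)
                = Complex.abs (∏ m ∈ S0, (z2 - e m)) := by
              rw [map_prod]
              exact Finset.prod_congr rfl fun m _ => Complex.abs.map_sub _ _
            rw [hcardS0, f1, f2]
    rw [e1]
    have hz : (b:ℝ) ^ (N0 - 1) = b ^ ((N0 : ℤ) - 1) := by
      rw [← zpow_natCast]
      congr 1
      have : ((N0 - 1 : ℕ) : ℤ) = (N0 : ℤ) - 1 := by
        rw [Nat.cast_sub hN0pos]
        norm_num
      rw [this]
    have hzz : b ^ ((N0 : ℤ) - 1) = b ^ ((N0 : ℤ) - 2) * b := by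
      rw [← zpow_add_one₀ hb0]
      congr 1
      ring
    rw [hz, hzz]
    have hP1nn := Complex.abs.nonneg (∏ m ∈ S0, (z1 - e m))
    have hP2nn := Complex.abs.nonneg (∏ m ∈ S0, (z2 - e m))
    have hbz : (0:ℝ) ≤ b ^ ((N0 : ℤ) - 2) := zpow_nonneg (le_of_lt hbpos) _
    have hN0R : (0:ℝ) ≤ (N0 : ℝ) := Nat.cast_nonneg N0
    calc b ^ ((N0 : ℤ) - 2) * b *
          (Complex.abs (∏ m ∈ S0, (z1 - e m)) * Complex.abs (∏ m ∈ S0, (z2 - e m)))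
        = b ^ ((N0 : ℤ) - 2) *
          (Complex.abs (∏ m ∈ S0, (z1 - e m)) * (Complex.abs (∏ m ∈ S0, (z2 - e m)) * b)) := by
          ring
      _ ≤ b ^ ((N0 : ℤ) - 2) * ((N0 : ℝ) * 2) := by
          refine mul_le_mul_of_nonneg_left ?_ hbz
          exact mul_le_mul hP1 hP2 (mul_nonneg hP2nn (le_of_lt hbpos)) hN0R
      _ = 2 * N0 * b ^ ((N0 : ℤ) - 2) := by ring
  -- split the erased index set into blocks
  set T : Finset ℕ := (Finset.range (r + 1)).erase j0 with hT
  have hBseteq : (Finset.range d).erase s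
      = S0 ∪ T.biUnion (fun j => B j) := by
    ext m
    simp only [Finset.mem_erase, Finset.mem_range, Finset.mem_union, Finset.mem_biUnion, hT, hS0]
    constructor
    · rintro ⟨hms, hmd⟩
      obtain ⟨j, hj1, hj2⟩ := hfind m hmd
      by_cases hjj : j = j0
      · left
        exact ⟨hms, hjj ▸ hj2⟩
      · right
        exact ⟨j, ⟨hjj, hj1⟩, hj2⟩
    · rintro (⟨hms, hmB⟩ | ⟨j, hjT, hmB⟩)
      · exact ⟨hms, hBsub j0 hj0r m hmB⟩
      · obtain ⟨hjj0, hjr⟩ := hjT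
        refine ⟨?_, hBsub j hjr m hmB⟩
        intro hmseq
        subst hmseq
        exact (Finset.disjoint_left.mp (hdisj j j0 hjr hj0r hjj0) hmB) hj0mem
  have hdisjST : Disjoint S0 (T.biUnion (fun j => B j)) := by
    rw [Finset.disjoint_left]
    intro a haS haT
    rw [Finset.mem_biUnion] at haT
    obtain ⟨j, hjT, haB⟩ := haT
    obtain ⟨hjj0, hjr⟩ := Finset.mem_erase.mp hjT
    rw [Finset.mem_range] at hjr
    have haB0 : a ∈ B j0 := Finset.erase_subset _ _ (hS0 ▸ haS)
    exact (Finset.disjoint_left.mp (hdisj j j0 hjr hj0r hjj0) haB) haB0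
  have hdisjT : ∀ j1 ∈ T, ∀ j2 ∈ T, j1 ≠ j2 → Disjoint (B j1) (B j2) := by
    intro j1 hj1 j2 hj2 hne
    obtain ⟨_, hj1r⟩ := Finset.mem_erase.mp hj1
    obtain ⟨_, hj2r⟩ := Finset.mem_erase.mp hj2
    exact hdisj j1 j2 (Finset.mem_range.mp hj1r) (Finset.mem_range.mp hj2r) hne
  -- assemble
  have hLHS : |hPoly d s t e (inner2 (Complex.I * (e s - e t)) x)|
      = (∏ m ∈ S0, |W - (c * e m).re|) * ∏ j ∈ T, ∏ m ∈ B j, |W - (c * e m).re| := by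
    unfold hPoly
    rw [Finset.abs_prod]
    have e0 : ∀ m : ℕ, |inner2 (Complex.I * (e s - e t)) x - inner2 (Complex.I * (e s - e t)) (e m)|
        = |W - (c * e m).re| := by
      intro m
      rw [← hWdef, inner2_eq]
    calc ∏ m ∈ (Finset.range d).erase s,
          |inner2 (Complex.I * (e s - e t)) x - inner2 (Complex.I * (e s - e t)) (e m)|
        = ∏ m ∈ (Finset.range d).erase s, |W - (c * e m).re| := by
          exact Finset.prod_congr rfl fun m _ => e0 m
      _ = ∏ m ∈ S0 ∪ T.biUnion (fun j => B j), |W - (c * e m).re| := by rw [hBseteq]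
      _ = (∏ m ∈ S0, |W - (c * e m).re|) *
            ∏ m ∈ T.biUnion (fun j => B j), |W - (c * e m).re| := by
          rw [Finset.prod_union hdisjST]
      _ = (∏ m ∈ S0, |W - (c * e m).re|) * ∏ j ∈ T, ∏ m ∈ B j, |W - (c * e m).re| := by
          rw [Finset.prod_biUnion hdisjT]
  rw [hLHS]
  -- bound the two factors
  have hTbound : ∏ j ∈ T, ∏ m ∈ B j, |W - (c * e m).re|
      ≤ ∏ j ∈ T, (4 * b ^ ((2 ^ (n j) : ℕ) : ℤ)) := by
    refine Finset.prod_le_prod ?_ ?_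
    · intro j _
      exact Finset.prod_nonneg fun m _ => abs_nonneg _
    · intro j hjT
      obtain ⟨_, hjr⟩ := Finset.mem_erase.mp hjT
      exact hfull_block j (Finset.mem_range.mp hjr)
  have hcardT : T.card = r := by
    rw [hT, Finset.card_erase_of_mem (Finset.mem_range.mpr hj0r), Finset.card_range]
    omega
  have hTprod : ∏ j ∈ T, (4 * b ^ ((2 ^ (n j) : ℕ) : ℤ))
      = 4 ^ r * b ^ ((d : ℤ) - (N0 : ℤ)) := by
    rw [Finset.prod_mul_distrib, Finset.prod_const, hcardT, prod_zpow' hb0]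
    congr 1
    congr 1
    have h1 : (∑ j ∈ T, (2 ^ (n j) : ℕ)) + N0 = d := by
      rw [hT, hN0]
      have := Finset.sum_erase_add (Finset.range (r + 1)) (fun j => (2:ℕ) ^ (n j))
        (Finset.mem_range.mpr hj0r)
      rw [this, ← hbin]
    have h2 : ((∑ j ∈ T, (2 ^ (n j) : ℕ) : ℕ) : ℤ) = ∑ j ∈ T, ((2 ^ (n j) : ℕ) : ℤ) := by
      push_cast
      rfl
    omega
  have hS0nn : (0:ℝ) ≤ ∏ m ∈ S0, |W - (c * e m).re| :=
    Finset.prod_nonneg fun m _ => abs_nonneg _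
  have hfinal : (∏ m ∈ S0, |W - (c * e m).re|) * ∏ j ∈ T, ∏ m ∈ B j, |W - (c * e m).re|
      ≤ (2 * N0 * b ^ ((N0 : ℤ) - 2)) * (4 ^ r * b ^ ((d : ℤ) - (N0 : ℤ))) := by
    refine mul_le_mul hdef_block ?_ ?_ ?_
    · rw [← hTprod]
      exact hTbound
    · exact Finset.prod_nonneg fun j _ => Finset.prod_nonneg fun m _ => abs_nonneg _
    · positivity
  refine le_trans hfinal ?_
  -- final arithmetic
  have hN0d : (N0 : ℝ) ≤ (d : ℝ) := by
    have : N0 ≤ d := by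
      rw [hbin, hN0]
      exact Finset.single_le_sum (f := fun j => (2:ℕ) ^ (n j)) (fun i _ => by positivity)
        (Finset.mem_range.mpr hj0r)
    exact_mod_cast this
  have hbd2 : b ^ ((N0 : ℤ) - 2) * b ^ ((d : ℤ) - (N0 : ℤ)) = b ^ ((d : ℤ) - 2) := by
    rw [← zpow_add₀ hb0]
    congr 1
    ring
  have step1 : (2 * (N0:ℝ) * b ^ ((N0 : ℤ) - 2)) * (4 ^ r * b ^ ((d : ℤ) - (N0 : ℤ)))
      = 2 * (N0:ℝ) * 4 ^ r * b ^ ((d : ℤ) - 2) := by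
    rw [← hbd2]
    ring
  rw [step1]
  have step2 : 2 * (N0:ℝ) * 4 ^ r * b ^ ((d : ℤ) - 2) ≤ 2 * (d:ℝ) * 4 ^ r * b ^ ((d : ℤ) - 2) := by
    have h4r : (0:ℝ) ≤ 4 ^ r := by positivity
    have hbz : (0:ℝ) ≤ b ^ ((d : ℤ) - 2) := zpow_nonneg (le_of_lt hbpos) _
    have hcore : 2 * (N0:ℝ) ≤ 2 * (d:ℝ) := by linarith
    exact mul_le_mul_of_nonneg_right (mul_le_mul_of_nonneg_right hcore h4r) hbz
  refine le_trans step2 (le_of_eq ?_)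
  -- 2 * d * 4^r * (U/2)^{d-2} = 2^{2r+1} * d * U^{d-2} / 2^{d-2}
  rw [hb, div_zpow]
  have hcast : ((d : ℤ) - 2) = ((d - 2 : ℕ) : ℤ) := by
    rw [Nat.cast_sub hd]
    norm_num
  rw [hcast, zpow_natCast, zpow_natCast]
  have h2p : (2:ℝ) ^ (2 * r + 1) = 2 * 4 ^ r := by
    rw [pow_succ, pow_mul]
    norm_num
    ring
  rw [h2p]
  ring


end LejaAuxiliary
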